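/- Let R be a commutative ring, S = R[X₁,...,X_n], let F ⊆ {1,...,n}, s ∉ F, and let R[F] ⊆ S denote the R-subalgebra generated by {Xᵢ : i ∈ F}. For any S-module M there is a short exact sequence of S-modules 0 → S ⊗_{R[F]} M → S ⊗_{R[F]} M → S ⊗_{R[F∪{s}]} M → 0, where the first map sends 1 ⊗ m to X_s ⊗ m − 1 ⊗ (X_s·m) and the second is induced by the inclusion R[F] ⊆ R[F∪{s}]. -/

import Mathlib

open TensorProduct

/-- The `R[F]`-module structure on an `MvPolynomial`-module `M`, obtained by restricting
scalars along the inclusion `R[F] ⊆ R[X₁,…,Xₙ]`, where `R[F]` is the subalgebra generated by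
the variables indexed by `F`. -/
noncomputable instance Subalgebra.moduleOfModule {R : Type*} [CommRing R] {S : Type*}
    [CommRing S] [Algebra R S] (A : Subalgebra R S) (M : Type*) [AddCommGroup M]
    [Module S M] : Module A M :=
  Module.compHom M (A.val : A →+* S)

/-- Compatibility of the restricted `A`-action with the `S`-action (needed for instance search). -/
instance Subalgebra.smulCommClassOfModule {R : Type*} [CommRing R] {S : Type*}
    [CommRing S] [Algebra R S] (A : Subalgebra R S) (M : Type*) [AddCommGroup M]
    [Module S M] :
    @SMulCommClass A S M (Subalgebra.moduleOfModule A M).toSMul _ where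
  smul_comm a t m := by
    show (a : S) • t • m = t • (a : S) • m
    rw [smul_smul, smul_smul, mul_comm]

open MvPolynomial

set_option maxHeartbeats 2000000
set_option synthInstance.maxHeartbeats 1000000

noncomputable section Split
open Classical
variable (R : Type*) [CommRing R] (n : ℕ) (G : Set (Fin n))

abbrev SS := MvPolynomial (Fin n) R
abbrev AA := MvPolynomial.supported R G
abbrev BB := MvPolynomial {x : Fin n // x ∉ G} (AA R n G)

def psi : BB R n G →ₐ[AA R n G] SS R n :=
  aeval (fun j => X (j : Fin n))

def chi : SS R n →ₐ[R] BB R n G :=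
  aeval (fun i => if h : i ∈ G then C (⟨X i, Algebra.subset_adjoin ⟨i, h, rfl⟩⟩ : AA R n G)
    else X (⟨i, h⟩ : {x : Fin n // x ∉ G}))

lemma psi_comp_chi (p : SS R n) : psi R n G (chi R n G p) = p := by
  have : ((psi R n G).restrictScalars R).comp (chi R n G) = AlgHom.id R (SS R n) := by
    apply MvPolynomial.algHom_ext
    intro i
    simp only [AlgHom.comp_apply, AlgHom.coe_restrictScalars, AlgHom.id_apply, chi, aeval_X]
    by_cases h : i ∈ G
    · simp only [h, dif_pos, psi]
      erw [aeval_C]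
      rfl
    · simp [h, psi]
  exact AlgHom.congr_fun this p

lemma chi_coe (a : AA R n G) : chi R n G (a : SS R n) = C a := by
  obtain ⟨p, hp⟩ := a
  induction hp using Algebra.adjoin_induction with
  | mem x hx =>
    obtain ⟨i, hi, rfl⟩ := hx
    simp only [chi, aeval_X, hi, dif_pos]
  | algebraMap r =>
    show chi R n G (C r) = _
    simp only [chi]
    erw [aeval_C]
    show C (algebraMap R (AA R n G) r) = _
    congr 1
  | add x y hx hy hx' hy' =>
    have : chi R n G (x + y) = chi R n G x + chi R n G y := map_add _ _ _
    rw [this, hx', hy', ← map_add]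
    rfl
  | mul x y hx hy hx' hy' =>
    have : chi R n G (x * y) = chi R n G x * chi R n G y := map_mul _ _ _
    rw [this, hx', hy', ← map_mul]
    rfl

def chiA : SS R n →ₐ[AA R n G] BB R n G :=
  { chi R n G with
    commutes' := fun a => by
      show chi R n G (a : SS R n) = _
      rw [chi_coe]
      rfl }

lemma chi_comp_psi (b : BB R n G) : chi R n G (psi R n G b) = b := by
  have : (chiA R n G).comp (psi R n G) = AlgHom.id _ _ := by
    apply MvPolynomial.algHom_ext
    intro j
    simp only [AlgHom.comp_apply, AlgHom.id_apply, psi, aeval_X]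
    show chi R n G (X (j:Fin n)) = X j
    simp [chi, j.2]
  exact AlgHom.congr_fun this b

def psiEquiv : BB R n G ≃ₐ[AA R n G] SS R n :=
  AlgEquiv.ofBijective (psi R n G)
    ⟨Function.LeftInverse.injective (chi_comp_psi R n G),
     Function.RightInverse.surjective (psi_comp_chi R n G)⟩
variable (M : Type*) [AddCommGroup M] [Module (MvPolynomial (Fin n) R) M]

abbrev IotaG := ({x : Fin n // x ∉ G} →₀ ℕ)

def Theta : (SS R n) ⊗[AA R n G] M ≃ₗ[AA R n G] (IotaG n G →₀ M) :=
  (TensorProduct.congr (psiEquiv R n G).symm.toLinearEquiv (LinearEquiv.refl _ M)).trans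
  ((TensorProduct.congr (basisMonomials _ _).repr (LinearEquiv.refl _ M)).trans
   (finsuppScalarLeft _ M _))

lemma psi_monomial (μ : IotaG n G) :
    psi R n G (monomial μ 1) = monomial (Finsupp.mapDomain Subtype.val μ) 1 := by
  simp only [psi]
  rw [aeval_monomial, map_one, one_mul, monomial_eq, C_1, one_mul]
  exact (Finsupp.prod_mapDomain_index_inj (h := fun i k => (X i : SS R n) ^ k) Subtype.val_injective).symm

lemma Theta_tmul (μ : IotaG n G) (m : M) :
    Theta R n G M ((monomial (Finsupp.mapDomain Subtype.val μ) 1 : SS R n) ⊗ₜ m)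
      = Finsupp.single μ m := by
  have h1 : (psiEquiv R n G).symm (monomial (Finsupp.mapDomain Subtype.val μ) 1 : SS R n)
      = monomial μ 1 := by
    rw [← psi_monomial]
    exact (psiEquiv R n G).toEquiv.symm_apply_eq.mpr rfl
  have h2 : (basisMonomials {x : Fin n // x ∉ G} (AA R n G)).repr (monomial μ 1)
      = Finsupp.single μ 1 := by
    have : (monomial μ (1 : AA R n G)) = basisMonomials {x : Fin n // x ∉ G} (AA R n G) μ := rfl
    rw [this]
    exact Module.Basis.repr_self _ _
  simp only [Theta, LinearEquiv.trans_apply, TensorProduct.congr_tmul, LinearEquiv.refl_apply]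
  change finsuppScalarLeft (AA R n G) M (IotaG n G) ((TensorProduct.congr (basisMonomials _ (AA R n G)).repr (LinearEquiv.refl _ M)) ((TensorProduct.congr (psiEquiv R n G).symm.toLinearEquiv (LinearEquiv.refl _ M)) ((monomial (Finsupp.mapDomain Subtype.val μ) 1 : SS R n) ⊗ₜ m))) = _
  rw [TensorProduct.congr_tmul, TensorProduct.congr_tmul, LinearEquiv.refl_apply, LinearEquiv.refl_apply]
  rw [AlgEquiv.toLinearEquiv_apply, h1, h2]
  ext i
  rw [finsuppScalarLeft_apply_tmul_apply]
  classical
  by_cases h : i = μ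
  · subst h; simp
    exact one_smul (SS R n) m
  · simp [Finsupp.single_apply, Ne.symm h, h]
    exact zero_smul (SS R n) m

lemma Theta_symm_single (μ : IotaG n G) (m : M) :
    (Theta R n G M).symm (Finsupp.single μ m)
      = (monomial (Finsupp.mapDomain Subtype.val μ) 1 : SS R n) ⊗ₜ m := by
  rw [← Theta_tmul R n G M μ m]
  exact (Theta R n G M).symm_apply_apply _

end Split

noncomputable section FinsuppLayer
variable {n : ℕ} {F : Finset (Fin n)} {s : Fin n} (hs : s ∉ F)
variable {S : Type*} [CommRing S] (Xs : S)
variable {M : Type*} [AddCommGroup M] [Module S M]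

/-- `s` as an element of the complement of `F`. -/
def sElt : {x : Fin n // x ∉ (↑F : Set (Fin n))} := ⟨s, by simpa using hs⟩

variable (s) in
def embs : {x : Fin n // x ∉ (↑(insert s F) : Set (Fin n))} →
    {x : Fin n // x ∉ (↑F : Set (Fin n))} :=
  fun j => ⟨j.1, fun h => j.2 (by simpa using Or.inr (by simpa using h))⟩

variable (s) in
lemma embs_injective : Function.Injective (embs (n := n) (F := F) s) := by
  intro a b h
  have := congrArg Subtype.val h
  exact Subtype.ext this

lemma embs_ne_sElt (j) : embs (n := n) (F := F) s j ≠ sElt hs := by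
  intro h
  exact j.2 (by simp [show j.1 = s from congrArg Subtype.val h])

abbrev IotaF (n : ℕ) (F : Finset (Fin n)) := ({x : Fin n // x ∉ (↑F : Set (Fin n))} →₀ ℕ)
abbrev IotaF' (n : ℕ) (s : Fin n) (F : Finset (Fin n)) :=
  ({x : Fin n // x ∉ (↑(insert s F) : Set (Fin n))} →₀ ℕ)

def deltaF : IotaF n F := Finsupp.single (sElt hs) 1

variable (s) in
def projF (μ : IotaF n F) : IotaF' n s F :=
  Finsupp.comapDomain (embs s) μ ((embs_injective s).injOn)

variable (s) in
lemma projF_apply (μ : IotaF n F) (j) : projF s μ j = μ (embs s j) := rfl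

/-- `D` in coordinates. -/
def Dmap : (IotaF n F →₀ M) →+ (IotaF n F →₀ M) :=
  Finsupp.mapDomain.addMonoidHom (· + deltaF hs) -
    Finsupp.mapRange.addMonoidHom (DistribMulAction.toAddMonoidHom M Xs)

/-- `E` in coordinates. -/
def Emap : (IotaF n F →₀ M) →+ (IotaF' n s F →₀ M) :=
  Finsupp.liftAddHom fun μ =>
    (Finsupp.singleAddHom (projF s μ)).comp (DistribMulAction.toAddMonoidHom M (Xs ^ μ (sElt hs)))

def rhoMap : (IotaF n F →₀ M) →+ (IotaF n F →₀ M) :=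
  Finsupp.liftAddHom fun μ =>
    (Finsupp.singleAddHom (Finsupp.mapDomain (embs s) (projF s μ))).comp
      (DistribMulAction.toAddMonoidHom M (Xs ^ μ (sElt hs)))

lemma Dmap_single (μ : IotaF n F) (m : M) :
    Dmap hs Xs (Finsupp.single μ m) =
      Finsupp.single (μ + deltaF hs) m - Finsupp.single μ (Xs • m) := by
  simp [Dmap, Finsupp.mapDomain_single, Finsupp.mapRange_single]

lemma Emap_single (μ : IotaF n F) (m : M) :
    Emap hs Xs (Finsupp.single μ m) =
      Finsupp.single (projF s μ) (Xs ^ μ (sElt hs) • m) := by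
  simp [Emap]

lemma rhoMap_single (μ : IotaF n F) (m : M) :
    rhoMap hs Xs (Finsupp.single μ m) =
      Finsupp.single (Finsupp.mapDomain (embs s) (projF s μ)) (Xs ^ μ (sElt hs) • m) := by
  simp [rhoMap]

lemma projF_add_single (μ : IotaF n F) (k : ℕ) :
    projF s (μ + Finsupp.single (sElt hs) k) = projF s μ := by
  ext j
  simp [projF_apply, Finsupp.single_apply, Ne.symm (embs_ne_sElt hs j)]

lemma apply_add_single (μ : IotaF n F) (k : ℕ) :
    (μ + Finsupp.single (sElt hs) k) (sElt hs) = μ (sElt hs) + k := by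
  simp

/-- decomposition `μ = emb (proj μ) + k·δ`. -/
lemma decomp (μ : IotaF n F) :
    Finsupp.mapDomain (embs s) (projF s μ) + Finsupp.single (sElt hs) (μ (sElt hs)) = μ := by
  ext i
  by_cases h : i = sElt hs
  · subst h
    rw [Finsupp.add_apply, Finsupp.mapDomain_notin_range, Finsupp.single_eq_same, zero_add]
    rintro ⟨j, hj⟩
    exact embs_ne_sElt hs j hj
  · have hxs : i.1 ≠ s := fun hx => h (Subtype.ext hx)
    have hi : (i : Fin n) ∉ (↑(insert s F) : Set (Fin n)) := by
      simp only [Finset.coe_insert, Set.mem_insert_iff]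
      push_neg
      exact ⟨hxs, by simpa using i.2⟩
    have : i = embs s ⟨i.1, hi⟩ := rfl
    rw [Finsupp.add_apply, Finsupp.single_apply, if_neg (Ne.symm h), add_zero, this,
      Finsupp.mapDomain_apply (embs_injective s)]
    rfl

lemma Dmap_eq_zero_iff {a : IotaF n F →₀ M} (ha : Dmap hs Xs a = 0) : a = 0 := by
  have key : ∀ μ : IotaF n F, a μ = Xs • a (μ + deltaF hs) := by
    intro μ
    have h1 : Finsupp.mapDomain (· + deltaF hs) a =
        Finsupp.mapRange (fun m => Xs • m) (smul_zero Xs) a := by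
      have := sub_eq_zero.mp ha
      exact this
    have h2 := DFunLike.congr_fun h1 (μ + deltaF hs)
    simpa [Finsupp.mapDomain_apply (add_left_injective (deltaF hs)),
      Finsupp.mapRange_apply] using h2
  have keyk : ∀ (k : ℕ) (μ : IotaF n F),
      a μ = Xs ^ k • a (μ + Finsupp.single (sElt hs) k) := by
    intro k
    induction k with
    | zero => intro μ; simp
    | succ k ih =>
      intro μ
      rw [key μ, ih (μ + deltaF hs)]
      rw [smul_smul, ← pow_succ']
      have hδ : deltaF hs + Finsupp.single (sElt hs) k
          = Finsupp.single (sElt hs) (k + 1) := by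
        rw [deltaF, ← Finsupp.single_add, add_comm]
      rw [add_assoc, hδ]
  ext μ
  set N := (a.support.sup fun ν => ν (sElt hs)) + 1 with hN
  have hnot : μ + Finsupp.single (sElt hs) N ∉ a.support := by
    intro hmem
    have hle := Finset.le_sup (f := fun ν => ν (sElt hs)) hmem
    simp only [Finsupp.add_apply, Finsupp.single_eq_same] at hle
    omega
  have : a (μ + Finsupp.single (sElt hs) N) = 0 := Finsupp.notMem_support_iff.mp hnot
  rw [keyk N μ, this, smul_zero]
  rfl

lemma Dmap_injective : Function.Injective (Dmap (M := M) hs Xs) := by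
  intro a b h
  have : Dmap hs Xs (a - b) = 0 := by rw [map_sub, h, sub_self]
  have := Dmap_eq_zero_iff hs Xs this
  exact sub_eq_zero.mp this

lemma Emap_comp_Dmap : (Emap (M := M) hs Xs).comp (Dmap hs Xs) = 0 := by
  apply Finsupp.addHom_ext
  intro μ m
  simp only [AddMonoidHom.comp_apply, AddMonoidHom.zero_apply]
  rw [Dmap_single, map_sub, Emap_single, Emap_single]
  rw [show μ + deltaF hs = μ + Finsupp.single (sElt hs) 1 from rfl]
  rw [projF_add_single, apply_add_single]
  rw [pow_succ, mul_smul]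
  simp

/-- every `single` is congruent mod `range Dmap` to its "degree-zero shift". -/
lemma single_sub_single_mem (k : ℕ) (ν : IotaF n F) (m : M) :
    ∃ c, Finsupp.single (ν + Finsupp.single (sElt hs) k) m
        - Finsupp.single ν (Xs ^ k • m) = Dmap hs Xs c := by
  induction k generalizing m with
  | zero => exact ⟨0, by simp⟩
  | succ k ih =>
    obtain ⟨c, hc⟩ := ih (Xs • m)
    refine ⟨Finsupp.single (ν + Finsupp.single (sElt hs) k) m + c, ?_⟩
    rw [map_add, Dmap_single, ← hc]
    have h1 : ν + Finsupp.single (sElt hs) k + deltaF hs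
        = ν + Finsupp.single (sElt hs) (k + 1) := by
      rw [add_assoc]
      congr 1
      rw [deltaF, ← Finsupp.single_add]
    rw [h1]
    have h2 : Xs ^ k • Xs • m = Xs ^ (k + 1) • m := by
      rw [smul_smul, ← pow_succ]
    rw [h2]
    abel

lemma rho_eq_mapDomain_comp_Emap :
    (rhoMap (M := M) hs Xs) =
      (Finsupp.mapDomain.addMonoidHom (Finsupp.mapDomain (embs s))).comp (Emap hs Xs) := by
  apply Finsupp.addHom_ext
  intro μ m
  simp only [AddMonoidHom.comp_apply]
  rw [rhoMap_single, Emap_single]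
  simp [Finsupp.mapDomain.addMonoidHom, Finsupp.mapDomain_single]

lemma sub_rho_mem_range (a : IotaF n F →₀ M) :
    ∃ c, a - rhoMap hs Xs a = Dmap hs Xs c := by
  induction a using Finsupp.induction with
  | zero => exact ⟨0, by simp⟩
  | single_add μ m a _ _ ih =>
    obtain ⟨c, hc⟩ := ih
    obtain ⟨c', hc'⟩ := single_sub_single_mem hs Xs (μ (sElt hs))
      (Finsupp.mapDomain (embs s) (projF s μ)) m
    rw [decomp hs μ] at hc'
    refine ⟨c' + c, ?_⟩
    rw [map_add, map_add, rhoMap_single, ← hc, ← hc']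
    abel

lemma ker_Emap_le_range_Dmap (a : IotaF n F →₀ M) (ha : Emap hs Xs a = 0) :
    ∃ c, a = Dmap hs Xs c := by
  obtain ⟨c, hc⟩ := sub_rho_mem_range hs Xs a
  have : rhoMap hs Xs a = 0 := by
    rw [rho_eq_mapDomain_comp_Emap]
    simp [ha]
  refine ⟨c, ?_⟩
  rw [← hc, this, sub_zero]

end FinsuppLayer

noncomputable section Main
variable {R : Type*} [CommRing R] {n : ℕ} {F : Finset (Fin n)} {s : Fin n} (hs : s ∉ F)
variable {M : Type*} [AddCommGroup M] [Module (MvPolynomial (Fin n) R) M]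

lemma theta_d_comm
    (d : (SS R n) ⊗[AA R n (↑F : Set (Fin n))] M →ₗ[SS R n]
      (SS R n) ⊗[AA R n (↑F : Set (Fin n))] M)
    (hd : ∀ m : M, d (1 ⊗ₜ m) =
      (X s : SS R n) ⊗ₜ m - 1 ⊗ₜ ((X s : SS R n) • m))
    (x : (SS R n) ⊗[AA R n (↑F : Set (Fin n))] M) :
    Theta R n (↑F : Set (Fin n)) M (d x)
      = Dmap hs (X s : SS R n) (Theta R n (↑F : Set (Fin n)) M x) := by
  have key : ((Theta R n (↑F : Set (Fin n)) M).toLinearMap.toAddMonoidHom.comp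
      (d.toAddMonoidHom.comp (Theta R n (↑F : Set (Fin n)) M).symm.toLinearMap.toAddMonoidHom))
      = Dmap hs (X s : SS R n) := by
    apply Finsupp.addHom_ext
    intro μ m
    simp only [AddMonoidHom.comp_apply, LinearMap.toAddMonoidHom_coe, LinearEquiv.coe_coe]
    rw [Theta_symm_single]
    set t : SS R n := monomial (Finsupp.mapDomain Subtype.val μ) 1 with ht
    have h1 : (t ⊗ₜ[AA R n (↑F : Set (Fin n))] m)
        = t • ((1 : SS R n) ⊗ₜ[AA R n (↑F : Set (Fin n))] m) := by
      rw [TensorProduct.smul_tmul', smul_eq_mul, mul_one]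
    rw [h1, map_smul, hd, smul_sub, TensorProduct.smul_tmul', TensorProduct.smul_tmul',
      smul_eq_mul, smul_eq_mul, mul_one]
    have h2 : t * (X s : SS R n)
        = monomial (Finsupp.mapDomain Subtype.val (μ + deltaF hs)) 1 := by
      rw [ht, X, monomial_mul, mul_one, Finsupp.mapDomain_add]
      congr 2
      rw [deltaF, Finsupp.mapDomain_single]
      rfl
    rw [h2, map_sub, Theta_tmul, Theta_tmul, Dmap_single]
  have := DFunLike.congr_fun key (Theta R n (↑F : Set (Fin n)) M x)
  simpa using this

lemma theta_e_comm
    (e : (SS R n) ⊗[AA R n (↑F : Set (Fin n))] M →ₗ[SS R n]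
      (SS R n) ⊗[AA R n (↑(insert s F) : Set (Fin n))] M)
    (he : ∀ (t : SS R n) (m : M), e (t ⊗ₜ m) = t ⊗ₜ m)
    (x : (SS R n) ⊗[AA R n (↑F : Set (Fin n))] M) :
    Theta R n (↑(insert s F) : Set (Fin n)) M (e x)
      = Emap hs (X s : SS R n) (Theta R n (↑F : Set (Fin n)) M x) := by
  have key : ((Theta R n (↑(insert s F) : Set (Fin n)) M).toLinearMap.toAddMonoidHom.comp
      (e.toAddMonoidHom.comp (Theta R n (↑F : Set (Fin n)) M).symm.toLinearMap.toAddMonoidHom))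
      = Emap hs (X s : SS R n) := by
    apply Finsupp.addHom_ext
    intro μ m
    simp only [AddMonoidHom.comp_apply, LinearMap.toAddMonoidHom_coe, LinearEquiv.coe_coe]
    rw [Theta_symm_single, he]
    have hdec : Finsupp.mapDomain Subtype.val μ
        = Finsupp.mapDomain Subtype.val
            (projF s μ : IotaG n (↑(insert s F) : Set (Fin n)))
          + Finsupp.single s (μ (sElt hs)) := by
      conv_lhs => rw [← decomp hs μ]
      rw [Finsupp.mapDomain_add]
      congr 1
      · rw [← Finsupp.mapDomain_comp]
        rfl
      · rw [Finsupp.mapDomain_single]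
        rfl
    have hXk_mem : ((X s : SS R n) ^ (μ (sElt hs)))
        ∈ AA R n (↑(insert s F) : Set (Fin n)) :=
      pow_mem (Algebra.subset_adjoin (Set.mem_image_of_mem X (by simp))) _
    have hfact : (monomial (Finsupp.mapDomain Subtype.val μ) 1 : SS R n)
        = monomial (Finsupp.mapDomain Subtype.val
            (projF s μ : IotaG n (↑(insert s F) : Set (Fin n)))) 1
          * (X s : SS R n) ^ (μ (sElt hs)) := by
      rw [X_pow_eq_monomial, monomial_mul, mul_one, ← hdec]
    rw [hfact]
    have hmove : ((monomial (Finsupp.mapDomain Subtype.val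
            (projF s μ : IotaG n (↑(insert s F) : Set (Fin n)))) 1 : SS R n)
          * (X s : SS R n) ^ (μ (sElt hs)))
          ⊗ₜ[AA R n (↑(insert s F) : Set (Fin n))] m
        = (monomial (Finsupp.mapDomain Subtype.val
            (projF s μ : IotaG n (↑(insert s F) : Set (Fin n)))) 1 : SS R n)
          ⊗ₜ[AA R n (↑(insert s F) : Set (Fin n))] ((X s : SS R n) ^ (μ (sElt hs)) • m) := by
      have h3 : ((⟨(X s : SS R n) ^ (μ (sElt hs)), hXk_mem⟩ :
            AA R n (↑(insert s F) : Set (Fin n))) •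
            (monomial (Finsupp.mapDomain Subtype.val
              (projF s μ : IotaG n (↑(insert s F) : Set (Fin n)))) 1 : SS R n))
          = (monomial (Finsupp.mapDomain Subtype.val
              (projF s μ : IotaG n (↑(insert s F) : Set (Fin n)))) 1 : SS R n)
            * (X s : SS R n) ^ (μ (sElt hs)) := mul_comm _ _
      rw [← h3, ← TensorProduct.smul_tmul']
      refine ((TensorProduct.mk (AA R n (↑(insert s F) : Set (Fin n))) (SS R n) M _).map_smul _ m).symm.trans ?_
      rfl
    rw [hmove, Theta_tmul, Emap_single]
  have := DFunLike.congr_fun key (Theta R n (↑F : Set (Fin n)) M x)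
  simpa using this

end Main


/-- Let `R` be a commutative ring, `S = R[X₁,…,Xₙ]`, `F ⊆ {1,…,n}`, `s ∉ F`, and `R[F] ⊆ S`
the `R`-subalgebra generated by the variables `Xᵢ` with `i ∈ F`.  For any `S`-module `M`
there is a short exact sequence of `S`-modules
`0 → S ⊗_{R[F]} M → S ⊗_{R[F]} M → S ⊗_{R[F∪{s}]} M → 0`,
where the first map `d` sends `1 ⊗ m` to `X_s ⊗ m − 1 ⊗ (X_s·m)` and the second map `e` is
induced by the inclusion `R[F] ⊆ R[F∪{s}]`. -/
theorem tensor_supported_short_exact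
    (R : Type*) [CommRing R] (n : ℕ) (F : Finset (Fin n)) (s : Fin n) (hs : s ∉ F)
    (M : Type*) [AddCommGroup M] [Module (MvPolynomial (Fin n) R) M]
    (d : TensorProduct (MvPolynomial.supported R (↑F : Set (Fin n)))
        (MvPolynomial (Fin n) R) M →ₗ[MvPolynomial (Fin n) R]
      TensorProduct (MvPolynomial.supported R (↑F : Set (Fin n))) (MvPolynomial (Fin n) R) M)
    (hd : ∀ m : M, d (1 ⊗ₜ m) =
      (MvPolynomial.X s : MvPolynomial (Fin n) R) ⊗ₜ m -
        1 ⊗ₜ ((MvPolynomial.X s : MvPolynomial (Fin n) R) • m))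
    (e : TensorProduct (MvPolynomial.supported R (↑F : Set (Fin n)))
        (MvPolynomial (Fin n) R) M →ₗ[MvPolynomial (Fin n) R]
      TensorProduct (MvPolynomial.supported R (↑(insert s F) : Set (Fin n)))
        (MvPolynomial (Fin n) R) M)
    (he : ∀ (t : MvPolynomial (Fin n) R) (m : M), e (t ⊗ₜ m) = t ⊗ₜ m) :
    Function.Injective d ∧ Function.Surjective e ∧ LinearMap.range d = LinearMap.ker e := by
  refine ⟨?_, ?_, ?_⟩
  · intro x y hxy
    apply (Theta R n (↑F : Set (Fin n)) M).injective
    apply Dmap_injective hs (X s : SS R n)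
    rw [← theta_d_comm hs d hd x, ← theta_d_comm hs d hd y, hxy]
  · intro z
    induction z using TensorProduct.induction_on with
    | zero => exact ⟨0, map_zero _⟩
    | tmul t m => exact ⟨t ⊗ₜ m, he t m⟩
    | add u v hu hv =>
      obtain ⟨a, ha⟩ := hu
      obtain ⟨b, hb⟩ := hv
      exact ⟨a + b, by rw [map_add, ha, hb]⟩
  · ext x
    simp only [LinearMap.mem_range, LinearMap.mem_ker]
    constructor
    · rintro ⟨y, rfl⟩
      apply (Theta R n (↑(insert s F) : Set (Fin n)) M).map_eq_zero_iff.mp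
      have h1 := theta_e_comm hs e he (d y)
      rw [theta_d_comm hs d hd y] at h1
      have h2 := DFunLike.congr_fun (Emap_comp_Dmap hs (X s : SS R n))
        (Theta R n (↑F : Set (Fin n)) M y)
      simp only [AddMonoidHom.comp_apply, AddMonoidHom.zero_apply] at h2
      rw [h1, h2]
    · intro hx
      have h1 := theta_e_comm hs e he x
      rw [hx, map_zero] at h1
      obtain ⟨c, hc⟩ := ker_Emap_le_range_Dmap hs (X s : SS R n)
        (Theta R n (↑F : Set (Fin n)) M x) h1.symm
      refine ⟨(Theta R n (↑F : Set (Fin n)) M).symm c, ?_⟩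
      apply (Theta R n (↑F : Set (Fin n)) M).injective
      rw [theta_d_comm hs d hd, (Theta R n (↑F : Set (Fin n)) M).apply_symm_apply, ← hc]
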